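/- There exists a universal constant c > 0 such that for every n > 3 the following holds. Let D be any finitely supported probability distribution over pairs (T, f), where (T, d_T) is a finite metric space satisfying the four-point condition and f : C_n → T is non-contractive with respect to the cycle metric. Then there exists y ∈ Z/nZ such that the expectation over D of |∇f(y)|_∞ = max_{z ≠ y} d_T(f(y),f(z))/d_{C_n}(y,z) is at least c·log n. -/

import Mathlib

/-- `d` is a metric on `X`. -/
def IsMetric {X : Type*} (d : X → X → ℝ) : Prop :=
  (∀ x y, 0 ≤ d x y) ∧ (∀ x y, d x y = 0 ↔ x = y) ∧
  (∀ x y, d x y = d y x) ∧ (∀ x y z, d x z ≤ d x y + d y z)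

/-- `ρ` satisfies the four-point condition (tree metric). -/
def FourPointCond {X : Type*} (ρ : X → X → ℝ) : Prop :=
  ∀ w x y z, ρ w x + ρ y z ≤ max (ρ w y + ρ x z) (ρ w z + ρ x y)

/-- The shortest-path metric of the unweighted `n`-cycle on `ZMod n`. -/
def cycleDist (n : ℕ) (i j : ZMod n) : ℝ := (min (i - j).val (j - i).val : ℕ)

lemma cycleDist_symm (n : ℕ) (i j : ZMod n) : cycleDist n i j = cycleDist n j i := by
  unfold cycleDist
  rw [Nat.min_comm]

lemma cycleDist_natCast (n : ℕ) [NeZero n] (s t : ℕ) (h1 : s ≤ t) (h2 : t - s ≤ n) :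
    cycleDist n (s : ZMod n) (t : ZMod n) = ((min (t - s) (n - (t - s)) : ℕ) : ℝ) := by
  have hkey : (t : ZMod n) = (s : ZMod n) + ((t - s : ℕ) : ZMod n) := by
    rw [← Nat.cast_add]; congr 1; omega
  rw [hkey]
  set d := t - s with hd
  have e1 : (s : ZMod n) - ((s : ZMod n) + (d : ZMod n)) = -(d : ZMod n) := by ring
  have e2 : ((s : ZMod n) + (d : ZMod n)) - (s : ZMod n) = (d : ZMod n) := by ring
  unfold cycleDist
  rw [e1, e2]
  rcases eq_or_lt_of_le h2 with hdn | hdn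
  · -- d = n
    have : ((d : ℕ) : ZMod n) = 0 := by rw [hdn, ZMod.natCast_self]
    rw [this]
    simp [hdn.symm]
  · rcases Nat.eq_zero_or_pos d with hd0 | hd0
    · rw [hd0]; simp
    · have hvd : ((d : ℕ) : ZMod n).val = d := ZMod.val_natCast_of_lt hdn
      have hnd : ((n - d : ℕ) : ZMod n) = -(d : ZMod n) := by
        have h : ((n - d : ℕ) : ZMod n) + ((d : ℕ) : ZMod n) = 0 := by
          rw [← Nat.cast_add]
          have : n - d + d = n := by omega
          rw [this, ZMod.natCast_self]
        exact eq_neg_of_add_eq_zero_left h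
      rw [← hnd, hvd, ZMod.val_natCast_of_lt (by omega : n - d < n), Nat.min_comm]

lemma harmonic_lb : ∀ M : ℕ, Real.log (M + 1) ≤ ∑ j ∈ Finset.range M, (1 : ℝ) / (j + 1)
  | 0 => by simp
  | (k + 1) => by
    rw [Finset.sum_range_succ]
    have ih := harmonic_lb k
    have hpos : (0 : ℝ) < (k : ℝ) + 1 := by positivity
    have hpos2 : (0 : ℝ) < (k : ℝ) + 2 := by positivity
    have hlog : Real.log (((k : ℝ) + 2) / ((k : ℝ) + 1)) ≤ 1 / ((k : ℝ) + 1) := by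
      have := Real.log_le_sub_one_of_pos (show (0:ℝ) < ((k : ℝ) + 2) / ((k : ℝ) + 1) by positivity)
      have heq : ((k : ℝ) + 2) / ((k : ℝ) + 1) - 1 = 1 / ((k : ℝ) + 1) := by
        rw [div_sub_one (by positivity : ((k:ℝ)+1) ≠ 0)]
        norm_num
      linarith [this, heq.le]
    have hsplit : Real.log (((k : ℝ) + 2) / ((k : ℝ) + 1)) =
        Real.log ((k : ℝ) + 2) - Real.log ((k : ℝ) + 1) := by
      rw [Real.log_div (by positivity) (by positivity)]
    have hcast : ((k : ℝ) + 1) + 1 = (k : ℝ) + 2 := by ring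
    push_cast
    rw [hcast]
    linarith

/-- Core combinatorial lemma: a non-contractive tree embedding of the `n`-cycle has a
cycle edge of tree-length at least `(⌊n/2⌋ - 1)/9`. -/
lemma exists_big_edge {T : Type*} (dT : T → T → ℝ) (hmet : IsMetric dT)
    (h4 : FourPointCond dT) (n : ℕ) (hn : 4 ≤ n) (x : ℕ → T)
    (hx : x n = x 0)
    (hnc : ∀ s t : ℕ, s ≤ t → t ≤ n →
      ((min (t - s) (n - (t - s)) : ℕ) : ℝ) ≤ dT (x s) (x t)) :
    ∃ t, t < n ∧ ((n / 2 : ℕ) : ℝ) - 1 ≤ 9 * dT (x t) (x (t + 1)) := by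
  classical
  by_contra hcon
  push_neg at hcon
  set m : ℕ := n / 2 with hmdef
  have hm2 : 2 ≤ m := by omega
  have hmlt : m < n := by omega
  have hnm : m ≤ n - m := by omega
  have hm2R : (2 : ℝ) ≤ (m : ℝ) := by exact_mod_cast hm2
  have hnmR : (m : ℝ) ≤ (n : ℝ) - (m : ℝ) := by
    have : ((m : ℕ) : ℝ) ≤ ((n - m : ℕ) : ℝ) := by exact_mod_cast hnm
    rwa [Nat.cast_sub hmlt.le] at this
  -- metric facts
  have dnn : ∀ u v, 0 ≤ dT u v := hmet.1
  have dsymm : ∀ u v, dT u v = dT v u := hmet.2.2.1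
  have dtri : ∀ u v w, dT u w ≤ dT u v + dT v w := hmet.2.2.2
  have dself : ∀ u, dT u u = 0 := fun u => (hmet.2.1 u u).2 rfl
  set E : ℝ := ((m : ℝ) - 1) / 9 with hEdef
  have hEpos : 0 < E := by rw [hEdef]; linarith
  have hedge : ∀ t, t < n → dT (x t) (x (t + 1)) < E := by
    intro t ht
    have := hcon t ht
    rw [hEdef]; linarith
  set L : ℝ := dT (x 0) (x m) with hLdef
  have hLm : (m : ℝ) ≤ L := by
    have h := hnc 0 m (Nat.zero_le _) hmlt.le
    rw [Nat.sub_zero, Nat.min_eq_left hnm] at h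
    exact h
  -- spine coordinates
  set a : ℕ → ℝ := fun t => (dT (x 0) (x t) + L - dT (x t) (x m)) / 2 with hadef
  set e : ℕ → ℝ := fun t => (dT (x 0) (x t) + dT (x t) (x m) - L) / 2 with hedef
  have h9E : 9 * E = (m : ℝ) - 1 := by rw [hEdef]; ring
  have hae : ∀ t, dT (x 0) (x t) = a t + e t := by
    intro t; simp only [hadef, hedef]; ring
  have haM : ∀ t, dT (x t) (x m) = L - a t + e t := by
    intro t; simp only [hadef, hedef]; ring
  have ha0 : a 0 = 0 := by simp only [hadef]; rw [dself, hLdef]; ring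
  have he0 : e 0 = 0 := by simp only [hedef]; rw [dself, hLdef]; ring
  have ham : a m = L := by simp only [hadef]; rw [dself, hLdef]; ring
  have hem : e m = 0 := by simp only [hedef]; rw [dself]; ring
  have han : a n = 0 := by
    simp only [hadef]; rw [hx, dself, hLdef]; ring
  have hann : ∀ t, 0 ≤ a t := by
    intro t
    have h1 : dT (x t) (x m) ≤ dT (x t) (x 0) + dT (x 0) (x m) := dtri _ _ _
    have h2 : dT (x t) (x 0) = dT (x 0) (x t) := dsymm _ _
    rw [← hLdef] at h1
    simp only [hadef]; linarith [h1, h2]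
  have henn : ∀ t, 0 ≤ e t := by
    intro t
    have h1 : dT (x 0) (x m) ≤ dT (x 0) (x t) + dT (x t) (x m) := dtri _ _ _
    rw [← hLdef] at h1
    simp only [hedef]; linarith
  have haL : ∀ t, a t ≤ L := by
    intro t
    have h1 : dT (x 0) (x t) ≤ dT (x 0) (x m) + dT (x m) (x t) := dtri _ _ _
    have h2 : dT (x m) (x t) = dT (x t) (x m) := dsymm _ _
    rw [← hLdef] at h1
    simp only [hadef]; linarith
  -- Fact A (from 4PC): if a t < a s then e s + e t + (a s - a t) ≤ dT (x s) (x t)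
  have factA : ∀ s t : ℕ, a t < a s → e s + e t + (a s - a t) ≤ dT (x s) (x t) := by
    intro s t hst
    have h := h4 (x 0) (x s) (x t) (x m)
    rcases le_max_iff.1 h with h1 | h2
    · exfalso
      rw [hae s, hae t, haM t, haM s] at h1
      linarith
    · rw [hae s, haM t] at h2
      have : dT (x s) (x t) = dT (x s) (x t) := rfl
      rw [← hLdef] at h2
      linarith
  -- Fact C (from 4PC): dT (x s) (x t) ≤ e s + e t + |a s - a t|
  have factC : ∀ s t : ℕ, dT (x s) (x t) ≤ e s + e t + |a s - a t| := by
    intro s t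
    have h := h4 (x 0) (x m) (x s) (x t)
    have habs1 : a s - a t ≤ |a s - a t| := le_abs_self _
    have habs2 : -(a s - a t) ≤ |a s - a t| := neg_le_abs _
    rcases le_max_iff.1 h with h1 | h2
    · rw [dsymm (x m) (x t), hae s, haM t, ← hLdef] at h1
      linarith
    · rw [dsymm (x m) (x s), hae t, haM s, ← hLdef] at h2
      linarith
  -- cast of non-contractivity
  have hncmin : ∀ s u : ℕ, s ≤ u → u ≤ n →
      min ((u : ℝ) - s) ((n : ℝ) - ((u : ℝ) - s)) ≤ dT (x s) (x u) := by
    intro s u h1 h2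
    have h3 := hnc s u h1 h2
    have c1 : ((u - s : ℕ) : ℝ) = (u : ℝ) - s := Nat.cast_sub h1
    have c2 : ((n - (u - s) : ℕ) : ℝ) = (n : ℝ) - ((u : ℝ) - s) := by
      rw [Nat.cast_sub (by omega), c1]
    rwa [Nat.cast_min, c1, c2] at h3
  -- crossing on the first arc
  have cross1 : ∀ lam : ℝ, 0 < lam → lam ≤ L →
      ∃ s, s < m ∧ a s < lam ∧ lam - E < a s ∧ e s < E := by
    intro lam hl0 hlL
    set F : Finset ℕ := (Finset.range m).filter (fun t => a t < lam) with hF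
    have hF0 : 0 ∈ F := by
      rw [hF, Finset.mem_filter, Finset.mem_range]
      exact ⟨by omega, by rw [ha0]; exact hl0⟩
    have hFne : F.Nonempty := ⟨0, hF0⟩
    set s : ℕ := F.max' hFne with hs
    have hsmem : s ∈ F := F.max'_mem hFne
    rw [hF, Finset.mem_filter, Finset.mem_range] at hsmem
    obtain ⟨hsm, hsl⟩ := hsmem
    have hs1 : lam ≤ a (s + 1) := by
      rcases eq_or_lt_of_le (Nat.succ_le_of_lt hsm) with heq | hlt
      · rw [show s + 1 = m from heq, ham]; exact hlL
      · by_contra hcontra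
        push_neg at hcontra
        have : s + 1 ∈ F := by
          rw [hF, Finset.mem_filter, Finset.mem_range]; exact ⟨hlt, hcontra⟩
        have := F.le_max' (s + 1) this
        omega
    have hedgeS : dT (x s) (x (s + 1)) < E := hedge s (by omega)
    have hfa := factA (s + 1) s (lt_of_lt_of_le hsl hs1)
    rw [dsymm (x (s+1)) (x s)] at hfa
    refine ⟨s, hsm, hsl, ?_, ?_⟩
    · linarith [henn (s + 1), henn s]
    · linarith [henn (s + 1)]
  -- crossing on the second arc
  have cross2 : ∀ lam : ℝ, 0 < lam → lam ≤ L →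
      ∃ u, m < u ∧ u ≤ n ∧ a u < lam ∧ lam - E < a u ∧ e u < E := by
    intro lam hl0 hlL
    set F : Finset ℕ := (Finset.Ioc m n).filter (fun t => a t < lam) with hF
    have hFn : n ∈ F := by
      rw [hF, Finset.mem_filter, Finset.mem_Ioc]
      exact ⟨⟨hmlt, le_refl n⟩, by rw [han]; exact hl0⟩
    have hFne : F.Nonempty := ⟨n, hFn⟩
    set u : ℕ := F.min' hFne with hu
    have humem : u ∈ F := F.min'_mem hFne
    rw [hF, Finset.mem_filter, Finset.mem_Ioc] at humem
    obtain ⟨⟨hum, hun⟩, hul⟩ := humem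
    have hu1 : lam ≤ a (u - 1) := by
      rcases Nat.lt_or_ge m (u - 1) with hlt | hle
      · by_contra hcontra
        push_neg at hcontra
        have : u - 1 ∈ F := by
          rw [hF, Finset.mem_filter, Finset.mem_Ioc]
          exact ⟨⟨hlt, by omega⟩, hcontra⟩
        have := F.min'_le (u - 1) this
        omega
      · have : u - 1 = m := by omega
        rw [this, ham]; exact hlL
    have huu : u - 1 + 1 = u := by omega
    have hedgeU : dT (x (u - 1)) (x u) < E := by
      have := hedge (u - 1) (by omega)
      rwa [huu] at this
    have hfa := factA (u - 1) u (lt_of_lt_of_le hul hu1)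
    refine ⟨u, hum, hun, hul, ?_, ?_⟩
    · linarith [henn (u - 1), henn u]
    · linarith [henn (u - 1)]
  -- the case-m predicate
  set Pm : ℝ → Prop := fun lam => ∃ s u : ℕ, s < m ∧ m < u ∧ u ≤ n ∧
      lam - E < a s ∧ a s < lam ∧ e s < E ∧
      lam - E < a u ∧ a u < lam ∧ e u < E ∧ (u : ℝ) - s ≤ 3 * E with hPm
  -- coupling
  have couple : ∀ lam : ℝ, 0 < lam → lam ≤ L →
      Pm lam ∨ ∃ s u : ℕ, s < m ∧ m < u ∧ u ≤ n ∧
        lam - E < a s ∧ a s < lam ∧ e s < E ∧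
        lam - E < a u ∧ a u < lam ∧ e u < E ∧ (s : ℝ) ≤ 3 * E ∧ (n : ℝ) - u ≤ 3 * E := by
    intro lam hl0 hlL
    obtain ⟨s, hsm, hsl, hsl2, hse⟩ := cross1 lam hl0 hlL
    obtain ⟨u, hum, hun, hul, hul2, hue⟩ := cross2 lam hl0 hlL
    have habs : |a s - a u| < E := by
      rw [abs_sub_lt_iff]; constructor <;> linarith
    have hdsu : dT (x s) (x u) < 3 * E := by
      have := factC s u
      linarith
    have hmin := hncmin s u (by omega) hun
    rcases min_le_iff.1 hmin with h1 | h2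
    · left
      exact ⟨s, u, hsm, hum, hun, hsl2, hsl, hse, hul2, hul, hue, by linarith⟩
    · right
      have hsnn : (0 : ℝ) ≤ (s : ℝ) := Nat.cast_nonneg s
      have hunn : (u : ℝ) ≤ (n : ℝ) := by exact_mod_cast hun
      refine ⟨s, u, hsm, hum, hun, hsl2, hsl, hse, hul2, hul, hue, ?_, ?_⟩ <;> linarith
  -- Pm holds at L
  have hPmL : Pm L := by
    have hL0 : 0 < L := by linarith
    rcases couple L hL0 (le_refl L) with h | h
    · exact h
    · exfalso
      obtain ⟨s, u, hsm, hum, hun, hsl2, hsl, hse, hul2, hul, hue, hs3, hn3⟩ := h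
      -- pair (s, m): dT (x s) (x m) = L - a s + e s < 2E, but cycle distance ≥ m - 3E
      have hd : dT (x s) (x m) < 2 * E := by
        rw [haM s]; linarith
      have hmin := hncmin s m hsm.le hmlt.le
      have hc1 : (m : ℝ) - 3 * E ≤ (m : ℝ) - (s : ℝ) := by linarith
      have hc2 : (m : ℝ) - 3 * E ≤ (n : ℝ) - ((m : ℝ) - (s : ℝ)) := by
        have hsnn : (0 : ℝ) ≤ (s : ℝ) := Nat.cast_nonneg s
        linarith
      have : (m : ℝ) - 3 * E ≤ dT (x s) (x m) := le_trans (le_min hc1 hc2) hmin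
      linarith [h9E]
  -- the B set and lam*
  set I : Finset ℕ := Finset.range (n + 1) with hI
  set Bset : Finset ℝ := (I.image a).filter (fun v => 0 < v ∧ v ≤ L ∧ Pm v) with hB
  have hLB : L ∈ Bset := by
    rw [hB, Finset.mem_filter]
    constructor
    · rw [Finset.mem_image]
      exact ⟨m, by rw [hI, Finset.mem_range]; omega, ham⟩
    · exact ⟨by linarith, le_refl L, hPmL⟩
  have hBne : Bset.Nonempty := ⟨L, hLB⟩
  set lam1 : ℝ := Bset.min' hBne with hlam1
  have hlam1mem : lam1 ∈ Bset := Bset.min'_mem hBne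
  rw [hB, Finset.mem_filter] at hlam1mem
  obtain ⟨hlam1img, hlam10, hlam1L, hPm1⟩ := hlam1mem
  obtain ⟨s1, u1, hs1m, hu1m, hu1n, hs1l2, hs1l, hs1e, hu1l2, hu1l, hu1e, hu1s1⟩ := hPm1
  -- Claim 1: lam1 ≥ m - 4E
  have hlam1lb : (m : ℝ) - 4 * E ≤ lam1 := by
    have hd : dT (x 0) (x u1) < lam1 + E := by
      have := factC 0 u1
      rw [ha0, he0] at this
      have habs : |0 - a u1| = a u1 := by
        rw [abs_sub_comm, sub_zero]; exact abs_of_nonneg (hann u1)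
      rw [habs] at this
      linarith
    have hmin := hncmin 0 u1 (Nat.zero_le _) hu1n
    have hmu1 : (m : ℝ) < (u1 : ℝ) := by exact_mod_cast hu1m
    have hu1ub : (u1 : ℝ) ≤ (m : ℝ) + 3 * E := by
      have hs1R : (s1 : ℝ) + 1 ≤ (m : ℝ) := by exact_mod_cast Nat.succ_le_of_lt hs1m
      linarith
    have hc1 : (m : ℝ) - 3 * E ≤ (u1 : ℝ) - 0 := by push_cast; linarith
    have hc2 : (m : ℝ) - 3 * E ≤ (n : ℝ) - ((u1 : ℝ) - 0) := by push_cast; linarith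
    have : (m : ℝ) - 3 * E ≤ dT (x 0) (x u1) := by
      refine le_trans (le_min ?_ ?_) hmin
      · simpa using hc1
      · simpa using hc2
    linarith
  have hlam1mE : 0 < lam1 - E := by linarith [h9E]
  -- the A set and lam0
  set Aset : Finset ℝ := (I.image a).filter (fun v => 0 < v ∧ v < lam1) with hA
  have hAne : Aset.Nonempty := by
    obtain ⟨s2, hs2m, hs2l, hs2l2, hs2e⟩ := cross1 lam1 hlam10 hlam1L
    refine ⟨a s2, ?_⟩
    rw [hA, Finset.mem_filter]
    constructor
    · rw [Finset.mem_image]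
      exact ⟨s2, by rw [hI, Finset.mem_range]; omega, rfl⟩
    · exact ⟨by linarith, hs2l⟩
  set lam0 : ℝ := Aset.max' hAne with hlam0
  have hlam0mem : lam0 ∈ Aset := Aset.max'_mem hAne
  rw [hA, Finset.mem_filter] at hlam0mem
  obtain ⟨hlam0img, hlam00, hlam0lt⟩ := hlam0mem
  have hlam0L : lam0 ≤ L := by
    rw [Finset.mem_image] at hlam0img
    obtain ⟨t, _, ht⟩ := hlam0img
    rw [← ht]; exact haL t
  -- lam0 is not in Bset
  have hlam0nB : ¬ Pm lam0 := by
    intro hP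
    have : lam0 ∈ Bset := by
      rw [hB, Finset.mem_filter]
      exact ⟨hlam0img, hlam00, hlam0L, hP⟩
    have := Bset.min'_le lam0 this
    rw [← hlam1] at this
    linarith
  -- crossing at lam0, must be case-0
  obtain ⟨s0, u0, hs0m, hu0m, hu0n, hs0l2, hs0l, hs0e, hu0l2, hu0l, hu0e, hrest⟩ :=
    (couple lam0 hlam00 hlam0L).resolve_left hlam0nB
  obtain ⟨hs03, _⟩ := hrest
  -- gap: a u1 ≤ lam0
  have hgap : a u1 ≤ lam0 := by
    have hmem : a u1 ∈ Aset := by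
      rw [hA, Finset.mem_filter]
      constructor
      · rw [Finset.mem_image]
        exact ⟨u1, by rw [hI, Finset.mem_range]; omega, rfl⟩
      · exact ⟨by linarith, hu1l⟩
    exact Aset.le_max' (a u1) hmem
  -- final contradiction via pair (s0, u1)
  have habs : |a s0 - a u1| ≤ E := by
    rw [abs_sub_le_iff]
    constructor <;> linarith
  have hd : dT (x s0) (x u1) < 3 * E := by
    have := factC s0 u1
    linarith
  have hmin := hncmin s0 u1 (by omega) hu1n
  have hmu1 : (m : ℝ) + 1 ≤ (u1 : ℝ) := by exact_mod_cast hu1m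
  have hu1ub : (u1 : ℝ) ≤ (m : ℝ) + 3 * E := by
    have hs1R : (s1 : ℝ) + 1 ≤ (m : ℝ) := by exact_mod_cast Nat.succ_le_of_lt hs1m
    linarith
  have hc1 : (m : ℝ) - 3 * E ≤ (u1 : ℝ) - (s0 : ℝ) := by linarith
  have hc2 : (m : ℝ) - 3 * E ≤ (n : ℝ) - ((u1 : ℝ) - (s0 : ℝ)) := by
    have hsnn : (0 : ℝ) ≤ (s0 : ℝ) := Nat.cast_nonneg s0
    linarith
  have hfin : (m : ℝ) - 3 * E ≤ dT (x s0) (x u1) := le_trans (le_min hc1 hc2) hmin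
  linarith [h9E]

lemma cycleDist_self (n : ℕ) (v : ZMod n) : cycleDist n v v = 0 := by
  unfold cycleDist; simp

lemma add_one_ne {n : ℕ} [NeZero n] (hn : 4 ≤ n) (v : ZMod n) : v + 1 ≠ v := by
  intro h
  have h1 : (1 : ZMod n) = 0 := by
    have := congrArg (fun t => t - v) h
    simpa using this
  haveI : Fact (1 < n) := ⟨by omega⟩
  have := congrArg ZMod.val h1
  rw [ZMod.val_one, ZMod.val_zero] at this
  omega

lemma cycleDist_add_one {n : ℕ} [NeZero n] (hn : 4 ≤ n) (v : ZMod n) :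
    cycleDist n v (v + 1) = 1 := by
  haveI : Fact (1 < n) := ⟨by omega⟩
  unfold cycleDist
  have h2 : (v + 1) - v = (1 : ZMod n) := by ring
  have h1v : ((v + 1) - v).val = 1 := by rw [h2, ZMod.val_one]
  have hge : 1 ≤ (v - (v + 1)).val := by
    refine Nat.one_le_iff_ne_zero.2 (fun h => ?_)
    have h3 : v - (v + 1) = 0 := (ZMod.val_eq_zero _).1 h
    have h4 : v = v + 1 := by linear_combination (sub_eq_zero.1 h3)
    exact add_one_ne hn v h4.symm
  rw [h1v, Nat.min_eq_right hge]
  norm_num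

lemma sum_gradient_lb {n : ℕ} {T : Type*} (dT : T → T → ℝ) [NeZero n] (hn : 4 ≤ n)
    (hmet : IsMetric dT) (h4 : FourPointCond dT) (f : ZMod n → T)
    (hnc : ∀ a b : ZMod n, cycleDist n a b ≤ dT (f a) (f b)) :
    (1 / 100 : ℝ) * n * Real.log n ≤
      ∑ y : ZMod n, ⨆ z : {z : ZMod n // z ≠ y}, dT (f y) (f z.1) / cycleDist n y z.1 := by
  classical
  set g : ZMod n → ℝ :=
    fun y => ⨆ z : {z : ZMod n // z ≠ y}, dT (f y) (f z.1) / cycleDist n y z.1 with hg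
  have bdd : ∀ y : ZMod n, BddAbove (Set.range
      fun z : {z : ZMod n // z ≠ y} => dT (f y) (f z.1) / cycleDist n y z.1) :=
    fun y => Set.Finite.bddAbove (Set.finite_range _)
  have hgle : ∀ (y z : ZMod n), z ≠ y →
      dT (f y) (f z) / cycleDist n y z ≤ g y := by
    intro y z hz
    exact le_ciSup (bdd y) (⟨z, hz⟩ : {z : ZMod n // z ≠ y})
  have hg1 : ∀ y : ZMod n, (1 : ℝ) ≤ g y := by
    intro y
    have hne : y + 1 ≠ y := add_one_ne hn y
    have hcd : cycleDist n y (y + 1) = 1 := cycleDist_add_one hn y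
    have hd1 : (1 : ℝ) ≤ dT (f y) (f (y + 1)) := by
      have := hnc y (y + 1)
      rwa [hcd] at this
    have := hgle y (y + 1) hne
    rw [hcd, div_one] at this
    linarith
  -- integer-indexed embedding
  set x : ℕ → T := fun t => f ((t : ℕ) : ZMod n) with hxdef
  have hx : x n = x 0 := by rw [hxdef]; simp
  have hncx : ∀ s t : ℕ, s ≤ t → t ≤ n →
      ((min (t - s) (n - (t - s)) : ℕ) : ℝ) ≤ dT (x s) (x t) := by
    intro s t h1 h2
    have h3 := hnc (s : ZMod n) (t : ZMod n)
    rw [cycleDist_natCast n s t h1 (by omega)] at h3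
    rw [hxdef]
    exact h3
  obtain ⟨t₀, ht₀, hedge⟩ := exists_big_edge dT hmet h4 n hn x hx hncx
  rw [hxdef] at hedge
  simp only at hedge
  set m : ℕ := n / 2 with hmdef
  have hm2 : 2 ≤ m := by omega
  have hm2R : (2 : ℝ) ≤ (m : ℝ) := by exact_mod_cast hm2
  set E2 : ℝ := ((m : ℝ) - 1) / 18 with hE2
  have hE2pos : 0 < E2 := by rw [hE2]; linarith
  have hedge2 : 2 * E2 ≤ dT (f ((t₀ : ℕ) : ZMod n)) (f (((t₀ + 1 : ℕ)) : ZMod n)) := by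
    rw [hE2]; linarith
  have dnn : ∀ u v : T, 0 ≤ dT u v := hmet.1
  -- pointwise gradient bound at distance j from the heavy edge
  have hstep : ∀ j : ℕ, j < n →
      E2 / (((min j (n - j) : ℕ) : ℝ) + 1) ≤ g (((t₀ + j : ℕ) : ZMod n)) := by
    intro j hj
    rcases Nat.eq_zero_or_pos j with hj0 | hjpos
    · subst hj0
      have hyx : ((t₀ + 0 : ℕ) : ZMod n) = ((t₀ : ℕ) : ZMod n) := by norm_num
      have hzy : (((t₀ + 1 : ℕ) : ZMod n)) = ((t₀ : ℕ) : ZMod n) + 1 := by push_cast; ring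
      have hne : ((t₀ : ℕ) : ZMod n) + 1 ≠ ((t₀ : ℕ) : ZMod n) := add_one_ne hn _
      have hcd : cycleDist n ((t₀ : ℕ) : ZMod n) (((t₀ : ℕ) : ZMod n) + 1) = 1 :=
        cycleDist_add_one hn _
      have hratio := hgle ((t₀ : ℕ) : ZMod n) (((t₀ : ℕ) : ZMod n) + 1) hne
      rw [hcd, div_one, ← hzy] at hratio
      rw [hyx]
      have hmin0 : ((min 0 (n - 0) : ℕ) : ℝ) = 0 := by norm_num
      rw [hmin0]
      norm_num
      linarith
    · -- j ≥ 1
      set y : ZMod n := ((t₀ + j : ℕ) : ZMod n) with hy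
      by_cases hcase : E2 ≤ dT (f y) (f ((t₀ : ℕ) : ZMod n))
      · have hcd : cycleDist n y ((t₀ : ℕ) : ZMod n) = ((min j (n - j) : ℕ) : ℝ) := by
          rw [cycleDist_symm, hy]
          have h := cycleDist_natCast n t₀ (t₀ + j) (by omega) (by omega)
          simpa using h
        have hmin1 : 1 ≤ min j (n - j) := by omega
        have hminR : (1 : ℝ) ≤ ((min j (n - j) : ℕ) : ℝ) := by exact_mod_cast hmin1
        have hne : ((t₀ : ℕ) : ZMod n) ≠ y := by
          intro h
          rw [h, cycleDist_self] at hcd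
          linarith
        have hratio := hgle y ((t₀ : ℕ) : ZMod n) hne
        rw [hcd] at hratio
        refine le_trans ?_ hratio
        exact div_le_div₀ (dnn _ _) hcase (by linarith) (by linarith)
      · push_neg at hcase
        have hj2 : 2 ≤ j := by
          rcases Nat.lt_or_ge j 2 with h | h
          · exfalso
            have hj1' : j = 1 := by omega
            rw [hy, hj1'] at hcase
            rw [hmet.2.2.1 (f (((t₀ + 1 : ℕ)) : ZMod n)) (f ((t₀ : ℕ) : ZMod n))] at hcase
            linarith
          · exact h
        have htri : E2 ≤ dT (f y) (f (((t₀ + 1 : ℕ)) : ZMod n)) := by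
          have h1 := hmet.2.2.2 (f ((t₀ : ℕ) : ZMod n)) (f y) (f (((t₀ + 1 : ℕ)) : ZMod n))
          have h2 : dT (f ((t₀ : ℕ) : ZMod n)) (f y) = dT (f y) (f ((t₀ : ℕ) : ZMod n)) :=
            hmet.2.2.1 _ _
          rw [h2] at h1
          linarith
        have hcd : cycleDist n y (((t₀ + 1 : ℕ)) : ZMod n)
            = ((min (j - 1) (n - (j - 1)) : ℕ) : ℝ) := by
          rw [cycleDist_symm, hy]
          have h := cycleDist_natCast n (t₀ + 1) (t₀ + j) (by omega) (by omega)
          have h6 : t₀ + j - (t₀ + 1) = j - 1 := by omega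
          rw [h6] at h
          exact h
        have hmin1 : 1 ≤ min (j - 1) (n - (j - 1)) := by omega
        have hminR : (1 : ℝ) ≤ ((min (j - 1) (n - (j - 1)) : ℕ) : ℝ) := by exact_mod_cast hmin1
        have hmono : ((min (j - 1) (n - (j - 1)) : ℕ) : ℝ) ≤ ((min j (n - j) : ℕ) : ℝ) + 1 := by
          have h7 : min (j - 1) (n - (j - 1)) ≤ min j (n - j) + 1 := by omega
          exact_mod_cast h7
        have hne : (((t₀ + 1 : ℕ)) : ZMod n) ≠ y := by
          intro h
          rw [h, cycleDist_self] at hcd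
          linarith
        have hratio := hgle y (((t₀ + 1 : ℕ)) : ZMod n) hne
        rw [hcd] at hratio
        refine le_trans ?_ hratio
        exact div_le_div₀ (dnn _ _) htri (by linarith) hmono
  -- reindex the sum
  have hre : ∑ j ∈ Finset.range n, g (((t₀ + j : ℕ) : ZMod n)) = ∑ y : ZMod n, g y := by
    apply Finset.sum_nbij' (i := fun k : ℕ => ((t₀ + k : ℕ) : ZMod n))
      (j := fun y : ZMod n => (y - ((t₀ : ℕ) : ZMod n)).val)
    · intro a _; exact Finset.mem_univ _
    · intro y _; rw [Finset.mem_range]; exact ZMod.val_lt _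
    · intro k hk
      rw [Finset.mem_range] at hk
      have h1 : ((t₀ + k : ℕ) : ZMod n) - ((t₀ : ℕ) : ZMod n) = ((k : ℕ) : ZMod n) := by
        push_cast; ring
      rw [h1, ZMod.val_natCast_of_lt hk]
    · intro y _
      have h1 : (((y - ((t₀ : ℕ) : ZMod n)).val : ℕ) : ZMod n) = y - ((t₀ : ℕ) : ZMod n) :=
        ZMod.natCast_rightInverse _
      push_cast
      rw [h1]
      ring
    · intro k _; rfl
  have hsum2 : ∑ j ∈ Finset.range n, E2 / (((min j (n - j) : ℕ) : ℝ) + 1)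
      ≤ ∑ y : ZMod n, g y := by
    rw [← hre]
    exact Finset.sum_le_sum (fun j hj => hstep j (Finset.mem_range.1 hj))
  have hsub : ∑ j ∈ Finset.range m, E2 / ((j : ℝ) + 1)
      ≤ ∑ j ∈ Finset.range n, E2 / (((min j (n - j) : ℕ) : ℝ) + 1) := by
    refine le_trans (Finset.sum_le_sum ?_)
      (Finset.sum_le_sum_of_subset_of_nonneg (Finset.range_subset_range.2 (by omega)) ?_)
    · intro j hj
      have h1 : ((min j (n - j) : ℕ) : ℝ) ≤ (j : ℝ) := by
        exact_mod_cast Nat.min_le_left j (n - j)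
      have h2 : (0 : ℝ) ≤ ((min j (n - j) : ℕ) : ℝ) := Nat.cast_nonneg _
      exact div_le_div₀ hE2pos.le le_rfl (by linarith) (by linarith)
    · intro j _ _
      positivity
  have hharm : E2 * Real.log ((m : ℝ) + 1) ≤ ∑ j ∈ Finset.range m, E2 / ((j : ℝ) + 1) := by
    have h1 := harmonic_lb m
    have h2 : ∑ j ∈ Finset.range m, E2 / ((j : ℝ) + 1)
        = E2 * ∑ j ∈ Finset.range m, 1 / ((j : ℝ) + 1) := by
      rw [Finset.mul_sum]
      exact Finset.sum_congr rfl (fun j _ => by rw [mul_one_div])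
    rw [h2]
    exact mul_le_mul_of_nonneg_left h1 hE2pos.le
  have hlb2 : E2 * Real.log ((m : ℝ) + 1) ≤ ∑ y : ZMod n, g y := by
    refine le_trans hharm (le_trans hsub hsum2)
  have hlb1 : (n : ℝ) ≤ ∑ y : ZMod n, g y := by
    have h1 := Finset.card_nsmul_le_sum Finset.univ g 1 (fun y _ => hg1 y)
    rw [Finset.card_univ, ZMod.card] at h1
    simpa using h1
  have hn4 : (4 : ℝ) ≤ (n : ℝ) := by exact_mod_cast hn
  rcases le_or_gt (n : ℝ) 100000 with hsize | hsize
  · have hlog12 : Real.log n ≤ 12 := by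
      rw [Real.log_le_iff_le_exp (by linarith)]
      have h1 : Real.exp 12 = Real.exp 1 ^ (12 : ℕ) := by
        rw [← Real.exp_nat_mul]; norm_num
      have h2 : (100000 : ℝ) ≤ 2.7182818283 ^ (12 : ℕ) := by norm_num
      have h3 : (2.7182818283 : ℝ) ^ (12 : ℕ) ≤ Real.exp 1 ^ (12 : ℕ) :=
        pow_le_pow_left₀ (by norm_num) Real.exp_one_gt_d9.le 12
      rw [h1]
      linarith
    have hlog0 : 0 ≤ Real.log n := Real.log_nonneg (by linarith)
    nlinarith [hlb1]
  · have hlog11 : (11 : ℝ) ≤ Real.log n := by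
      rw [Real.le_log_iff_exp_le (by linarith)]
      have h1 : Real.exp 11 = Real.exp 1 ^ (11 : ℕ) := by
        rw [← Real.exp_nat_mul]; norm_num
      have h3 : Real.exp 1 ^ (11 : ℕ) ≤ (2.7182818286 : ℝ) ^ (11 : ℕ) :=
        pow_le_pow_left₀ (Real.exp_pos 1).le Real.exp_one_lt_d9.le 11
      have h2 : (2.7182818286 : ℝ) ^ (11 : ℕ) ≤ 100000 := by norm_num
      rw [h1]
      linarith
    have hm1 : (n : ℝ) / 2 ≤ (m : ℝ) + 1 := by
      have h3 : n ≤ 2 * (m + 1) := by omega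
      have h4 := (Nat.cast_le (α := ℝ)).2 h3
      push_cast at h4
      linarith
    have hlogm : Real.log n - 0.7 ≤ Real.log ((m : ℝ) + 1) := by
      have h2 := Real.log_le_log (by linarith : (0 : ℝ) < (n : ℝ) / 2) hm1
      rw [Real.log_div (by linarith) (by norm_num)] at h2
      have h5 := Real.log_two_lt_d9
      linarith
    have hE2lb : ((n : ℝ) - 3) / 36 ≤ E2 := by
      have h3 : n ≤ 2 * m + 1 := by omega
      have h4 := (Nat.cast_le (α := ℝ)).2 h3
      push_cast at h4
      rw [hE2]; linarith
    have hlogmpos : (0 : ℝ) < Real.log n - 0.7 := by linarith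
    have hchain : ((n : ℝ) - 3) / 36 * (Real.log n - 0.7) ≤ E2 * Real.log ((m : ℝ) + 1) :=
      mul_le_mul hE2lb hlogm hlogmpos.le hE2pos.le
    have hfinal : (1 / 100 : ℝ) * (n : ℝ) * Real.log n
        ≤ ((n : ℝ) - 3) / 36 * (Real.log n - 0.7) := by
      have p1 : 0 ≤ ((n : ℝ) - 100000) * (Real.log n - 11) :=
        mul_nonneg (by linarith) (by linarith)
      nlinarith [p1]
    linarith

/-- There is a universal `c > 0` such that for every `n > 3` and every finitely supported
distribution over non-contractive embeddings of the `n`-cycle into finite tree metrics,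
some point has expected maximum gradient at least `c log n`. -/
theorem cycle_tree_max_gradient_lower_bound :
    ∃ c : ℝ, 0 < c ∧
      ∀ (n : ℕ), 3 < n →
        ∀ (m : ℕ) (w : Fin m → ℝ) (T : Fin m → Type)
          (dT : ∀ i, T i → T i → ℝ) (f : ∀ i, ZMod n → T i),
          (∀ i, 0 ≤ w i) → (∑ i, w i = 1) →
          (∀ i, w i ≠ 0 →
            Finite (T i) ∧ IsMetric (dT i) ∧ FourPointCond (dT i) ∧
            ∀ a b : ZMod n, cycleDist n a b ≤ dT i (f i a) (f i b)) →
          ∃ y : ZMod n,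
            c * Real.log n ≤
              ∑ i, w i * (⨆ z : {z : ZMod n // z ≠ y},
                dT i (f i y) (f i z.1) / cycleDist n y z.1) := by
  classical
  refine ⟨1 / 100, by norm_num, ?_⟩
  intro n hn M w T dT f hw hsum hsupp
  haveI : NeZero n := ⟨by omega⟩
  haveI : Nonempty (ZMod n) := ⟨0⟩
  by_contra hcon
  push_neg at hcon
  set s : Fin M → ZMod n → ℝ := fun i y => ⨆ z : {z : ZMod n // z ≠ y},
    dT i (f i y) (f i z.1) / cycleDist n y z.1 with hs
  have key : ∀ i : Fin M, w i * ((1 / 100 : ℝ) * n * Real.log n)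
      ≤ w i * (∑ y : ZMod n, s i y) := by
    intro i
    rcases eq_or_ne (w i) 0 with h0 | h0
    · rw [h0, zero_mul, zero_mul]
    · obtain ⟨hfin, hmet, h4, hncD⟩ := hsupp i h0
      exact mul_le_mul_of_nonneg_left
        (sum_gradient_lb (dT i) (by omega) hmet h4 (f i) hncD) (hw i)
  have h1 : (1 / 100 : ℝ) * (n : ℝ) * Real.log n
      ≤ ∑ i, w i * (∑ y : ZMod n, s i y) := by
    calc (1 / 100 : ℝ) * (n : ℝ) * Real.log n
        = (∑ i, w i) * ((1 / 100 : ℝ) * (n : ℝ) * Real.log n) := by rw [hsum, one_mul]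
      _ = ∑ i, w i * ((1 / 100 : ℝ) * (n : ℝ) * Real.log n) := by rw [Finset.sum_mul]
      _ ≤ ∑ i, w i * (∑ y : ZMod n, s i y) := Finset.sum_le_sum (fun i _ => key i)
  have h2 : ∑ i, w i * (∑ y : ZMod n, s i y) = ∑ y : ZMod n, ∑ i, w i * s i y := by
    simp_rw [Finset.mul_sum]
    rw [Finset.sum_comm]
  have h3 : ∑ y : ZMod n, ∑ i, w i * s i y
      < ∑ y : ZMod n, (1 / 100 : ℝ) * Real.log n := by
    refine Finset.sum_lt_sum_of_nonempty Finset.univ_nonempty (fun y _ => ?_)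
    exact hcon y
  have h4 : ∑ y : ZMod n, (1 / 100 : ℝ) * Real.log n
      = (n : ℝ) * ((1 / 100 : ℝ) * Real.log n) := by
    rw [Finset.sum_const, Finset.card_univ, ZMod.card, nsmul_eq_mul]
  rw [h2] at h1
  rw [h4] at h3
  nlinarith [h1, h3]
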